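/- For any n×n matrix A over a commutative semiring S, the semiring Cayley–Hamilton identity holds: Aⁿ + Σ_{1≤k≤n, k even} A^{n−k}·tr(Λ⁺_k(A)) + Σ_{1≤k≤n, k odd} A^{n−k}·tr(Λ⁻_k(A)) = Σ_{1≤k≤n, k even} A^{n−k}·tr(Λ⁻_k(A)) + Σ_{1≤k≤n, k odd} A^{n−k}·tr(Λ⁺_k(A)). -/

import Mathlib

open scoped Classical

noncomputable section

/-- Positive part of the bideterminant: sum over even permutations. -/
def detp {S : Type*} [CommSemiring S] {k : ℕ} (A : Matrix (Fin k) (Fin k) S) : S :=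
  ∑ σ ∈ Finset.univ.filter (fun σ : Equiv.Perm (Fin k) => Equiv.Perm.sign σ = 1),
    ∏ i, A i (σ i)

/-- Negative part of the bideterminant: sum over odd permutations. -/
def detm {S : Type*} [CommSemiring S] {k : ℕ} (A : Matrix (Fin k) (Fin k) S) : S :=
  ∑ σ ∈ Finset.univ.filter (fun σ : Equiv.Perm (Fin k) => Equiv.Perm.sign σ = -1),
    ∏ i, A i (σ i)

/-- The submatrix `A[I|J]` of `A` for `k`-element subsets `I, J` of the index set,
with rows and columns taken in increasing order. -/
def subm {S : Type*} {n k : ℕ} (A : Matrix (Fin n) (Fin n) S)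
    (I J : {s : Finset (Fin n) // s.card = k}) : Matrix (Fin k) (Fin k) S :=
  fun a b => A (I.1.orderIsoOfFin I.2 a) (J.1.orderIsoOfFin J.2 b)

/-- The positive `k`-th compound matrix `Λ⁺_k(A)`. -/
def compP {S : Type*} [CommSemiring S] {n : ℕ} (k : ℕ) (A : Matrix (Fin n) (Fin n) S) :
    Matrix {s : Finset (Fin n) // s.card = k} {s : Finset (Fin n) // s.card = k} S :=
  fun I J => detp (subm A I J)

/-- The negative `k`-th compound matrix `Λ⁻_k(A)`. -/
def compM {S : Type*} [CommSemiring S] {n : ℕ} (k : ℕ) (A : Matrix (Fin n) (Fin n) S) :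
    Matrix {s : Finset (Fin n) // s.card = k} {s : Finset (Fin n) // s.card = k} S :=
  fun I J => detm (subm A I J)

/-! ### Ring-level results -/

section RingPart

open Finset Matrix Polynomial

variable {R : Type*} [CommRing R] {m : Type*} [Fintype m] [DecidableEq m]

/-- det of a matrix whose rows in `s` are standard basis vectors. -/
lemma det_piecewise_single (s : Finset m) (A : Matrix m m R) :
    Matrix.det (fun i => s.piecewise (fun i => Pi.single i (1 : R)) A i) =
      Matrix.det (fun a b : {i // ¬ i ∈ s} => A a.1 b.1) := by
  set B : Matrix m m R := fun i => s.piecewise (fun i => Pi.single i (1 : R)) A i with hB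
  have he := Matrix.det_submatrix_equiv_self (Equiv.sumCompl (· ∈ s)) B
  rw [← he]
  have : B.submatrix (Equiv.sumCompl (· ∈ s)) (Equiv.sumCompl (· ∈ s)) =
      Matrix.fromBlocks 1 0 (fun a b => A a.1 b.1) (fun a b => A a.1 b.1) := by
    ext (a | a) (b | b)
    · show s.piecewise (fun i => Pi.single i (1:R)) (A : m → m → R) a.1 b.1 = (1 : Matrix s s R) a b
      dsimp only [Finset.piecewise]; rw [if_pos a.2]
      rw [Matrix.one_apply]
      by_cases h : a = b
      · subst h; simp
      · rw [if_neg h, Pi.single_apply, if_neg]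
        exact fun hc => h (Subtype.ext hc.symm)
    · show s.piecewise (fun i => Pi.single i (1:R)) (A : m → m → R) a.1 b.1 = 0
      dsimp only [Finset.piecewise]; rw [if_pos a.2]
      rw [Pi.single_apply, if_neg]
      exact fun hc => b.2 (hc ▸ a.2)
    · show s.piecewise (fun i => Pi.single i (1:R)) (A : m → m → R) a.1 b.1 = A a.1 b.1
      dsimp only [Finset.piecewise]; rw [if_neg a.2]
    · show s.piecewise (fun i => Pi.single i (1:R)) (A : m → m → R) a.1 b.1 = A a.1 b.1
      dsimp only [Finset.piecewise]; rw [if_neg a.2]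
  rw [this]
  exact (Matrix.det_fromBlocks_zero₁₂ (1 : Matrix s s R)
    (Matrix.of fun (a : {i // ¬ i ∈ s}) (b : s) => A a.1 b.1)
    (Matrix.of fun (a b : {i // ¬ i ∈ s}) => A a.1 b.1)).trans (by rw [Matrix.det_one, one_mul]; rfl)

/-- Expansion of `det (diagonal d + A)` as a sum of principal minors. -/
lemma det_diagonal_add (d : m → R) (A : Matrix m m R) :
    Matrix.det (Matrix.diagonal d + A) =
      ∑ s : Finset m, (∏ i ∈ sᶜ, d i) * Matrix.det (fun a b : {i // i ∈ s} => A a.1 b.1) := by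
  have h0 : Matrix.det (Matrix.diagonal d + A) =
      ∑ t : Finset m, Matrix.det (fun i => t.piecewise (Matrix.diagonal d) A i) := by
    exact MultilinearMap.map_add_univ
      (Matrix.detRowAlternating : (m → R) [⋀^m]→ₗ[R] R).toMultilinearMap
      (fun i => Matrix.diagonal d i) (fun i => A i)
  rw [h0]
  have h1 : ∀ t : Finset m,
      Matrix.det (fun i => t.piecewise (Matrix.diagonal d) A i) =
      (∏ i ∈ t, d i) * Matrix.det (fun a b : {i // ¬ i ∈ t} => A a.1 b.1) := by
    intro t
    have hmat : (fun i => t.piecewise (Matrix.diagonal d) A i) =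
        (fun i => t.piecewise
          (fun i => d i • (t.piecewise (fun i => Pi.single i (1:R)) A) i)
          (t.piecewise (fun i => Pi.single i (1:R)) A) i) := by
      funext i
      by_cases h : i ∈ t
      · dsimp only [Finset.piecewise]; rw [if_pos h, if_pos h, if_pos h]
        funext j
        simp [Matrix.diagonal_apply, Pi.single_apply, eq_comm]
      · dsimp only [Finset.piecewise]; rw [if_neg h, if_neg h, if_neg h]
    rw [hmat, ← det_piecewise_single t A]
    have := (Matrix.detRowAlternating : (m → R) [⋀^m]→ₗ[R] R).map_piecewise_smul d
      (t.piecewise (fun i => Pi.single i (1:R)) A) t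
    unfold Matrix.det
    erw [this]
    rw [smul_eq_mul]
    rfl
  simp_rw [h1]
  rw [← Equiv.sum_comp (Equiv.trans (Function.Involutive.toPerm _ compl_involutive) (Equiv.refl _))
    (fun s => (∏ i ∈ sᶜ, d i) * Matrix.det (fun a b : {i // i ∈ s} => A a.1 b.1))]
  refine Finset.sum_congr rfl fun t _ => ?_
  simp only [Equiv.trans_apply, Equiv.refl_apply, Function.Involutive.coe_toPerm, compl_compl]
  congr 1
  rw [← Matrix.det_submatrix_equiv_self
    (Equiv.subtypeEquivRight (fun i => (Finset.mem_compl (s := t) (a := i))))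
    (fun a b : {i // ¬ i ∈ t} => A a.1 b.1)]
  rfl

variable {n : ℕ}

/-- The characteristic polynomial expanded by principal minors. -/
lemma charpoly_expand (A : Matrix (Fin n) (Fin n) R) :
    A.charpoly = ∑ s : Finset (Fin n),
      C ((-1 : R) ^ s.card * Matrix.det (fun a b : {i // i ∈ s} => A a.1 b.1))
        * X ^ (n - s.card) := by
  have hch : Matrix.charmatrix A =
      Matrix.diagonal (fun _ : Fin n => (X : R[X])) + ((-A).map C) := by
    ext i j
    simp [Matrix.charmatrix, sub_eq_add_neg, Matrix.scalar_apply, Matrix.diagonal_apply]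
  rw [Matrix.charpoly, hch, det_diagonal_add]
  refine Finset.sum_congr rfl fun s _ => ?_
  rw [Finset.prod_const, Finset.card_compl, Fintype.card_fin]
  have h1 : (fun a b : {i // i ∈ s} => ((-A).map C) a.1 b.1) =
      (C : R →+* R[X]).mapMatrix (fun a b : {i // i ∈ s} => (-A) a.1 b.1) := rfl
  erw [h1, ← RingHom.map_det]
  have h2 : (fun a b : {i // i ∈ s} => (-A) a.1 b.1) =
      -(fun a b : {i // i ∈ s} => A a.1 b.1) := rfl
  erw [h2, Matrix.det_neg]
  rw [Fintype.card_coe, mul_comm]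

/-- The sum of the principal `k × k` minors. -/
def Esum (k : ℕ) (A : Matrix (Fin n) (Fin n) R) : R :=
  ∑ I : {s : Finset (Fin n) // s.card = k}, Matrix.det (subm A I I)

lemma det_subm {k : ℕ} (A : Matrix (Fin n) (Fin n) R) (I : {s : Finset (Fin n) // s.card = k}) :
    Matrix.det (subm A I I) = Matrix.det (fun a b : {i // i ∈ I.1} => A a.1 b.1) := by
  rw [← Matrix.det_submatrix_equiv_self (I.1.orderIsoOfFin I.2).toEquiv
    (fun a b : {i // i ∈ I.1} => A a.1 b.1)]
  rfl

lemma Esum_zero (A : Matrix (Fin n) (Fin n) R) : Esum 0 A = 1 := by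
  haveI : Unique {s : Finset (Fin n) // s.card = 0} :=
    ⟨⟨⟨∅, Finset.card_empty⟩⟩, fun b => Subtype.ext (Finset.card_eq_zero.mp b.2)⟩
  rw [Esum, Fintype.sum_unique]
  exact Matrix.det_isEmpty

/-- Cayley–Hamilton over a commutative ring, in the principal-minors form. -/
lemma ring_CH (A : Matrix (Fin n) (Fin n) R) :
    A ^ n + ∑ k ∈ Finset.Icc 1 n, ((-1 : R) ^ k * Esum k A) • A ^ (n - k) = 0 := by
  have h0 := Matrix.aeval_self_charpoly A
  rw [charpoly_expand, map_sum] at h0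
  have h1 : ∀ s : Finset (Fin n),
      (Polynomial.aeval A) (C ((-1 : R) ^ s.card * Matrix.det (fun a b : {i // i ∈ s} => A a.1 b.1))
        * X ^ (n - s.card)) =
      ((-1 : R) ^ s.card * Matrix.det (fun a b : {i // i ∈ s} => A a.1 b.1)) • A ^ (n - s.card) := by
    intro s
    rw [_root_.map_mul, aeval_C, map_pow, aeval_X, ← Algebra.smul_def]
  simp_rw [h1] at h0
  have h2 : ∀ x : Finset (Fin n), x ∈ Finset.univ → x.card ∈ Finset.range (n + 1) := by
    intro x _
    simpa [Nat.lt_succ_iff] using le_trans (Finset.card_le_univ x) (by simp)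
  rw [← Finset.sum_fiberwise_of_maps_to h2] at h0
  have h3 : ∀ k ∈ Finset.range (n + 1),
      (∑ s ∈ Finset.univ.filter (fun s : Finset (Fin n) => s.card = k),
        ((-1 : R) ^ s.card * Matrix.det (fun a b : {i // i ∈ s} => A a.1 b.1)) • A ^ (n - s.card))
      = ((-1 : R) ^ k * Esum k A) • A ^ (n - k) := by
    intro k _
    rw [show Esum k A = ∑ s ∈ Finset.univ.filter (fun s : Finset (Fin n) => s.card = k),
        Matrix.det (fun a b : {i // i ∈ s} => A a.1 b.1) from ?_]
    · rw [Finset.mul_sum, Finset.sum_smul]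
      refine Finset.sum_congr rfl fun s hs => ?_
      rw [Finset.mem_filter] at hs
      rw [hs.2]
    · rw [Finset.sum_subtype (p := fun s : Finset (Fin n) => s.card = k) _ (by simp)
        (fun s => Matrix.det (fun a b : {i // i ∈ s} => A a.1 b.1))]
      exact Finset.sum_congr rfl fun I _ => (det_subm A I)
  rw [Finset.sum_congr rfl h3] at h0
  have h4 : Finset.range (n + 1) = insert 0 (Finset.Icc 1 n) := by
    ext x; simp [Nat.lt_succ_iff]; omega
  rw [h4, Finset.sum_insert (by simp)] at h0
  rw [Esum_zero] at h0
  simpa using h0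

lemma detp_sub_detm {k : ℕ} (B : Matrix (Fin k) (Fin k) R) : detp B - detm B = B.det := by
  rw [← Matrix.det_transpose, Matrix.det_apply']
  rw [← Finset.sum_filter_add_sum_filter_not Finset.univ
    (fun σ : Equiv.Perm (Fin k) => Equiv.Perm.sign σ = 1)]
  have h1 : ∀ σ ∈ Finset.univ.filter (fun σ : Equiv.Perm (Fin k) => Equiv.Perm.sign σ = 1),
      ((Equiv.Perm.sign σ : ℤ) : R) * ∏ i, Bᵀ (σ i) i = ∏ i, B i (σ i) := by
    intro σ hσ
    rw [Finset.mem_filter] at hσ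
    rw [hσ.2]
    simp [Matrix.transpose_apply]
  have h2 : ∀ σ ∈ Finset.univ.filter (fun σ : Equiv.Perm (Fin k) => ¬ Equiv.Perm.sign σ = 1),
      ((Equiv.Perm.sign σ : ℤ) : R) * ∏ i, Bᵀ (σ i) i = -∏ i, B i (σ i) := by
    intro σ hσ
    rw [Finset.mem_filter] at hσ
    rcases Int.units_eq_one_or (Equiv.Perm.sign σ) with h | h
    · exact absurd h hσ.2
    · rw [h]; simp [Matrix.transpose_apply]
  rw [Finset.sum_congr rfl h1, Finset.sum_congr rfl h2]
  rw [show Finset.univ.filter (fun σ : Equiv.Perm (Fin k) => ¬ Equiv.Perm.sign σ = 1)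
      = Finset.univ.filter (fun σ : Equiv.Perm (Fin k) => Equiv.Perm.sign σ = -1) from
    Finset.filter_congr fun σ _ => ⟨fun h => (Int.units_eq_one_or _).resolve_left h,
      fun h h1 => by rw [h1] at h; exact absurd h (by decide)⟩]
  rw [Finset.sum_neg_distrib, _root_.detp, _root_.detm, sub_eq_add_neg]

lemma trace_compP_sub_compM (k : ℕ) (A : Matrix (Fin n) (Fin n) R) :
    Matrix.trace (compP k A) - Matrix.trace (compM k A) = Esum k A := by
  rw [Matrix.trace, Matrix.trace, ← Finset.sum_sub_distrib]
  exact Finset.sum_congr rfl fun I _ => detp_sub_detm (subm A I I)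

/-- The semiring Cayley–Hamilton identity, over a commutative ring. -/
theorem ring_statement (A : Matrix (Fin n) (Fin n) R) :
    A ^ n
      + ∑ k ∈ (Finset.Icc 1 n).filter (fun k => Even k),
          Matrix.trace (compP k A) • A ^ (n - k)
      + ∑ k ∈ (Finset.Icc 1 n).filter (fun k => ¬ Even k),
          Matrix.trace (compM k A) • A ^ (n - k)
    = ∑ k ∈ (Finset.Icc 1 n).filter (fun k => Even k),
          Matrix.trace (compM k A) • A ^ (n - k)
      + ∑ k ∈ (Finset.Icc 1 n).filter (fun k => ¬ Even k),
          Matrix.trace (compP k A) • A ^ (n - k) := by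
  have key := ring_CH A
  rw [← Finset.sum_filter_add_sum_filter_not (Finset.Icc 1 n) (fun k => Even k)] at key
  have he : ∑ k ∈ (Finset.Icc 1 n).filter (fun k => Even k),
      ((-1 : R) ^ k * Esum k A) • A ^ (n - k)
      = ∑ k ∈ (Finset.Icc 1 n).filter (fun k => Even k),
          Matrix.trace (compP k A) • A ^ (n - k)
      - ∑ k ∈ (Finset.Icc 1 n).filter (fun k => Even k),
          Matrix.trace (compM k A) • A ^ (n - k) := by
    rw [← Finset.sum_sub_distrib]
    refine Finset.sum_congr rfl fun k hk => ?_
    rw [Finset.mem_filter] at hk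
    rw [hk.2.neg_one_pow, one_mul, ← trace_compP_sub_compM, sub_smul]
  have ho : ∑ k ∈ (Finset.Icc 1 n).filter (fun k => ¬ Even k),
      ((-1 : R) ^ k * Esum k A) • A ^ (n - k)
      = ∑ k ∈ (Finset.Icc 1 n).filter (fun k => ¬ Even k),
          Matrix.trace (compM k A) • A ^ (n - k)
      - ∑ k ∈ (Finset.Icc 1 n).filter (fun k => ¬ Even k),
          Matrix.trace (compP k A) • A ^ (n - k) := by
    rw [← Finset.sum_sub_distrib]
    refine Finset.sum_congr rfl fun k hk => ?_
    rw [Finset.mem_filter] at hk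
    rw [(Nat.not_even_iff_odd.mp hk.2).neg_one_pow, ← trace_compP_sub_compM,
      neg_one_mul, neg_sub, sub_smul]
  rw [he, ho] at key
  have hz : A ^ n
      + ∑ k ∈ (Finset.Icc 1 n).filter (fun k => Even k),
          Matrix.trace (compP k A) • A ^ (n - k)
      + ∑ k ∈ (Finset.Icc 1 n).filter (fun k => ¬ Even k),
          Matrix.trace (compM k A) • A ^ (n - k)
      - (∑ k ∈ (Finset.Icc 1 n).filter (fun k => Even k),
          Matrix.trace (compM k A) • A ^ (n - k)
      + ∑ k ∈ (Finset.Icc 1 n).filter (fun k => ¬ Even k),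
          Matrix.trace (compP k A) • A ^ (n - k)) = 0 := by
    rw [← key]; abel
  exact sub_eq_zero.mp hz

end RingPart

/-! ### Transfer along semiring homomorphisms -/

section Transfer

open Finset Matrix

variable {R S : Type*} [CommSemiring R] [CommSemiring S] (f : R →+* S)

lemma detp_map {k : ℕ} (B : Matrix (Fin k) (Fin k) R) : detp (B.map f) = f (detp B) := by
  rw [_root_.detp, _root_.detp, map_sum]
  exact Finset.sum_congr rfl fun σ _ => by rw [map_prod]; rfl

lemma detm_map {k : ℕ} (B : Matrix (Fin k) (Fin k) R) : detm (B.map f) = f (detm B) := by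
  rw [_root_.detm, _root_.detm, map_sum]
  exact Finset.sum_congr rfl fun σ _ => by rw [map_prod]; rfl

lemma term_map {n : ℕ} (c : R) (B : Matrix (Fin n) (Fin n) R) (m : ℕ) :
    (c • B ^ m).map f = f c • (B.map f) ^ m := by
  have : (B ^ m).map f = (B.map f) ^ m := by
    rw [← RingHom.mapMatrix_apply, ← RingHom.mapMatrix_apply, map_pow]
  rw [← this]
  ext i j
  simp [Matrix.map_apply]

lemma trace_compP_map {n k : ℕ} (B : Matrix (Fin n) (Fin n) R) :
    Matrix.trace (compP k (B.map f)) = f (Matrix.trace (compP k B)) := by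
  rw [Matrix.trace, Matrix.trace, map_sum]
  exact Finset.sum_congr rfl fun I _ => detp_map f (subm B I I)

lemma trace_compM_map {n k : ℕ} (B : Matrix (Fin n) (Fin n) R) :
    Matrix.trace (compM k (B.map f)) = f (Matrix.trace (compM k B)) := by
  rw [Matrix.trace, Matrix.trace, map_sum]
  exact Finset.sum_congr rfl fun I _ => detm_map f (subm B I I)

lemma side_pushP {n : ℕ} (B : Matrix (Fin n) (Fin n) R) (t : Finset ℕ) :
    ∑ k ∈ t, Matrix.trace (compP k (B.map f)) • (B.map f) ^ (n - k)
      = (∑ k ∈ t, Matrix.trace (compP k B) • B ^ (n - k)).map f := by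
  conv_rhs => rw [← RingHom.mapMatrix_apply, map_sum]
  exact Finset.sum_congr rfl fun k _ => by
    rw [RingHom.mapMatrix_apply, term_map, trace_compP_map]

lemma side_pushM {n : ℕ} (B : Matrix (Fin n) (Fin n) R) (t : Finset ℕ) :
    ∑ k ∈ t, Matrix.trace (compM k (B.map f)) • (B.map f) ^ (n - k)
      = (∑ k ∈ t, Matrix.trace (compM k B) • B ^ (n - k)).map f := by
  conv_rhs => rw [← RingHom.mapMatrix_apply, map_sum]
  exact Finset.sum_congr rfl fun k _ => by
    rw [RingHom.mapMatrix_apply, term_map, trace_compM_map]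

lemma pow_push {n m : ℕ} (B : Matrix (Fin n) (Fin n) R) :
    (B.map f) ^ m = (B ^ m).map f := by
  rw [← RingHom.mapMatrix_apply, ← RingHom.mapMatrix_apply, map_pow]

end Transfer

/-- Straubing's semiring Cayley–Hamilton identity. -/
theorem cayley_hamilton_semiring {S : Type*} [CommSemiring S] {n : ℕ}
    (A : Matrix (Fin n) (Fin n) S) :
    A ^ n
      + ∑ k ∈ (Finset.Icc 1 n).filter (fun k => Even k),
          Matrix.trace (compP k A) • A ^ (n - k)
      + ∑ k ∈ (Finset.Icc 1 n).filter (fun k => ¬ Even k),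
          Matrix.trace (compM k A) • A ^ (n - k)
    = ∑ k ∈ (Finset.Icc 1 n).filter (fun k => Even k),
          Matrix.trace (compM k A) • A ^ (n - k)
      + ∑ k ∈ (Finset.Icc 1 n).filter (fun k => ¬ Even k),
          Matrix.trace (compP k A) • A ^ (n - k) := by
  set X₀ : Matrix (Fin n) (Fin n) (MvPolynomial (Fin n × Fin n) ℕ) :=
    fun i j => MvPolynomial.X (i, j) with hX₀
  -- the statement for the generic matrix over `MvPolynomial _ ℕ`
  have hgen : X₀ ^ n
      + ∑ k ∈ (Finset.Icc 1 n).filter (fun k => Even k),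
          Matrix.trace (compP k X₀) • X₀ ^ (n - k)
      + ∑ k ∈ (Finset.Icc 1 n).filter (fun k => ¬ Even k),
          Matrix.trace (compM k X₀) • X₀ ^ (n - k)
    = ∑ k ∈ (Finset.Icc 1 n).filter (fun k => Even k),
          Matrix.trace (compM k X₀) • X₀ ^ (n - k)
      + ∑ k ∈ (Finset.Icc 1 n).filter (fun k => ¬ Even k),
          Matrix.trace (compP k X₀) • X₀ ^ (n - k) := by
    set ψ : MvPolynomial (Fin n × Fin n) ℕ →+* MvPolynomial (Fin n × Fin n) ℤ :=
      MvPolynomial.map (Nat.castRingHom ℤ) with hψdef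
    have hψ : Function.Injective ψ :=
      MvPolynomial.map_injective _ Nat.cast_injective
    have hminj : Function.Injective
        (fun M : Matrix (Fin n) (Fin n) (MvPolynomial (Fin n × Fin n) ℕ) => M.map ψ) := by
      intro M N h
      have h' : M.map ψ = N.map ψ := h
      refine Matrix.ext fun i j => ?_
      exact hψ ((Matrix.ext_iff.mpr h') i j)
    have hring := ring_statement (X₀.map ψ)
    rw [pow_push, side_pushP, side_pushP, side_pushM, side_pushM] at hring
    apply hminj
    show _ = _
    refine Matrix.ext fun i j => ?_
    have h := (Matrix.ext_iff.mpr hring) i j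
    simp only [Matrix.map_apply, Matrix.add_apply] at h ⊢
    simpa [map_add] using h
  -- transfer to `S` along evaluation
  set φ : MvPolynomial (Fin n × Fin n) ℕ →+* S :=
    MvPolynomial.eval₂Hom (Nat.castRingHom S) (fun p : Fin n × Fin n => A p.1 p.2) with hφdef
  have hA : X₀.map φ = A := by
    refine Matrix.ext fun i j => ?_
    show φ (MvPolynomial.X (i, j)) = A i j
    simp [hX₀, hφdef, Matrix.map_apply, MvPolynomial.eval₂Hom_X']
  rw [← hA, pow_push, side_pushP, side_pushP, side_pushM, side_pushM]
  refine Matrix.ext fun i j => ?_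
  have h := (Matrix.ext_iff.mpr hgen) i j
  simp only [Matrix.map_apply, Matrix.add_apply] at h ⊢
  rw [← map_add, ← map_add, ← map_add, h]
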